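/- Let K be a perfect field of characteristic p > 0, T(x) = Σ_{i=0}^n a_i x^{p^i} ∈ K[x] with a₀ ≠ 0, and S(x) = T(x)^p / x^p = Σ a_i^p x^{p(p^i−1)}. Define g(x) = x^p + 1/(T(x) + S(x)). Then g′(x) = −a₀/(T(x)+S(x))², so g has no finite critical points other than poles, and the branch locus of g: ℙ¹ → ℙ¹ is contained in {∞}. -/

import Mathlib

open Polynomial Finset OnePoint
open scoped Classical

variable {F : Type*} [Field F]

/-- Evaluation of a rational function at a point of `ℙ¹`. -/
noncomputable def rEval (f : RatFunc F) (a : OnePoint F) : OnePoint F :=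
  Option.elim (a : Option F)
    (if f.denom.degree < f.num.degree then (∞ : OnePoint F)
      else OnePoint.some (f.num.coeff f.denom.natDegree / f.denom.leadingCoeff))
    (fun x => if f.denom.eval x = 0 then (∞ : OnePoint F)
      else OnePoint.some (f.num.eval x / f.denom.eval x))

/-- Ramification index of a rational function at a finite point. -/
noncomputable def ramIdxFin (f : RatFunc F) (x : F) : ℕ :=
  if f.denom.eval x = 0 then f.denom.rootMultiplicity x
  else (f.num - C (f.num.eval x / f.denom.eval x) * f.denom).rootMultiplicity x

/-- The rational function `f(1/x)`. -/
noncomputable def invSub (f : RatFunc F) : RatFunc F :=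
  RatFunc.eval (algebraMap F (RatFunc F)) (RatFunc.X)⁻¹ f

/-- Ramification index of a rational function at a point of `ℙ¹`. -/
noncomputable def ramIdx (f : RatFunc F) (a : OnePoint F) : ℕ :=
  Option.elim (a : Option F) (ramIdxFin (invSub f) 0) (fun x => ramIdxFin f x)

/-- The branch locus of the morphism `ℙ¹ → ℙ¹` induced by a rational function. -/
noncomputable def branchLocus (f : RatFunc F) : Set (OnePoint F) :=
  {w | ∃ a : OnePoint F, rEval f a = w ∧ 2 ≤ ramIdx f a}

/-- The (formal) derivative of a rational function. -/
noncomputable def rDeriv (f : RatFunc F) : RatFunc F :=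
  algebraMap F[X] (RatFunc F) (derivative f.num * f.denom - f.num * derivative f.denom) /
    algebraMap F[X] (RatFunc F) (f.denom ^ 2)

/-- Base change of rational functions along a field embedding. -/
noncomputable def ratFuncMap {K L : Type*} [Field K] [Field L] (φ : K →+* L) :
    RatFunc K →+* RatFunc L :=
  RatFunc.mapRingHom (Polynomial.mapRingHom φ) (by
    intro x hx
    simp only [Submonoid.mem_comap, Polynomial.coe_mapRingHom]
    rw [mem_nonZeroDivisors_iff_ne_zero] at hx ⊢
    exact (Polynomial.map_ne_zero_iff φ.injective).mpr hx)


section Helpers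

variable {L : Type*} [Field L]

lemma gcd_one_of_coprime (P Q : L[X]) (h : IsCoprime P Q) : gcd P Q = 1 := by
  rw [← _root_.normalize_gcd, normalize_eq_one]
  exact (gcd_isUnit_iff P Q).mpr h

lemma numdenom_aux (m : ℕ) (Q : L[X]) (hQ : Q ≠ 0) (g : RatFunc L)
    (hg : g = algebraMap L[X] (RatFunc L) (X ^ m) + (algebraMap L[X] (RatFunc L) Q)⁻¹) :
    g.num = C Q.leadingCoeff⁻¹ * (X ^ m * Q + 1) ∧
    g.denom = C Q.leadingCoeff⁻¹ * Q := by
  have haQ : algebraMap L[X] (RatFunc L) Q ≠ 0 := by simpa using hQ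
  have hco : IsCoprime (X ^ m * Q + 1 : L[X]) Q := ⟨1, -(X ^ m), by ring⟩
  have hgd : g = algebraMap L[X] (RatFunc L) (X ^ m * Q + 1) / algebraMap L[X] (RatFunc L) Q := by
    rw [hg, map_add, map_mul, map_one, add_div, mul_div_assoc, div_self haQ, mul_one, one_div]
  have hgcd := gcd_one_of_coprime _ _ hco
  refine ⟨?_, ?_⟩
  · rw [hgd, RatFunc.num_div, hgcd]
    simp [EuclideanDomain.div_one]
  · rw [hgd, RatFunc.denom_div _ hQ, hgcd]
    simp [EuclideanDomain.div_one]

/-- Core lemma: all the facts about `g = X^m + 1/Q`. -/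
lemma core_aux (m : ℕ) (hm : 0 < m) (b : L) (hb : b ≠ 0) (Q : L[X]) (hQ : Q ≠ 0)
    (hQ' : derivative Q = C b) (hXm : derivative (X ^ m : L[X]) = 0)
    (g : RatFunc L)
    (hg : g = algebraMap L[X] (RatFunc L) (X ^ m) + (algebraMap L[X] (RatFunc L) Q)⁻¹) :
    rDeriv g = - (algebraMap L[X] (RatFunc L) (C b)) / (algebraMap L[X] (RatFunc L) Q) ^ 2 ∧
    g.denom.degree < g.num.degree ∧
    (∀ x : L, g.denom.eval x ≠ 0 → ramIdxFin g x = 1) := by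
  obtain ⟨hnum, hdenom⟩ := numdenom_aux m Q hQ g hg
  set c : L := Q.leadingCoeff⁻¹ with hc
  have hc0 : c ≠ 0 := inv_ne_zero (leadingCoeff_ne_zero.mpr hQ)
  set P : L[X] := X ^ m * Q + 1 with hPdef
  have hP0 : P ≠ 0 := by
    intro h
    have : derivative P = 0 := by rw [h]; simp
    rw [hPdef, derivative_add, derivative_mul, hXm, hQ', derivative_one, add_zero,
      zero_mul, zero_add] at this
    exact hb (by simpa [hQ] using mul_eq_zero.mp this)
  have hP' : derivative P = X ^ m * C b := by
    rw [hPdef, derivative_add, derivative_mul, hXm, hQ', derivative_one, add_zero,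
      zero_mul, zero_add]
  have hkey : derivative P * Q - P * derivative Q = -C b := by
    rw [hP', hQ', hPdef]; ring
  have haQ : algebraMap L[X] (RatFunc L) Q ≠ 0 := by simpa using hQ
  have hacc : algebraMap L[X] (RatFunc L) (C (c * c)) ≠ 0 := by
    simpa using mul_ne_zero hc0 hc0
  have hdP : P.degree = Q.degree + m := by
    have h1 : (X ^ m * Q : L[X]).degree = Q.degree + m := by
      rw [degree_mul, degree_X_pow]; exact add_comm _ _
    have hlt : (1 : L[X]).degree < (X ^ m * Q : L[X]).degree := by
      rw [degree_one, h1]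
      have h0 : (0 : WithBot ℕ) < m := by exact_mod_cast hm
      calc (0 : WithBot ℕ) < m := h0
        _ = 0 + m := (zero_add _).symm
        _ ≤ Q.degree + m := add_le_add (zero_le_degree_iff.mpr hQ) le_rfl
    rw [hPdef, degree_add_eq_left_of_degree_lt hlt, h1]
  refine ⟨?_, ?_, ?_⟩
  · rw [rDeriv, hnum, hdenom]
    have h1 : derivative (C c * P) * (C c * Q) - C c * P * derivative (C c * Q) =
        C (c * c) * (-C b) := by
      rw [derivative_C_mul, derivative_C_mul, ← hkey, C_mul]; ring
    have h2 : (C c * Q) ^ 2 = C (c * c) * Q ^ 2 := by rw [C_mul]; ring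
    rw [h1, h2]
    have hac : (algebraMap L[X] (RatFunc L)) (C c) ≠ 0 := by
      simpa using hc0
    rw [map_mul, map_neg, map_mul (algebraMap L[X] (RatFunc L)) (C (c * c)) (Q ^ 2), map_pow,
      mul_div_mul_left _ _
        hacc]
  · rw [hnum, hdenom, degree_C_mul hc0, degree_C_mul hc0, hdP]
    have hbot : Q.degree ≠ ⊥ := by simpa [degree_eq_bot] using hQ
    have h0 : (0 : WithBot ℕ) < m := by exact_mod_cast hm
    calc Q.degree = Q.degree + 0 := (add_zero _).symm
      _ < Q.degree + m := WithBot.add_lt_add_left hbot h0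
  · intro x hx
    have heQ : Q.eval x ≠ 0 := by
      intro h; apply hx; rw [hdenom]; simp [h]
    have hdx : g.denom.eval x ≠ 0 := hx
    rw [ramIdxFin, if_neg hdx]
    set v : L := g.num.eval x / g.denom.eval x with hv
    have hv' : v = P.eval x / Q.eval x := by
      rw [hv, hnum, hdenom]
      simp only [eval_mul, eval_C]
      rw [mul_div_mul_left _ _ hc0]
    set h : L[X] := g.num - C v * g.denom with hh
    have hroot : h.eval x = 0 := by
      rw [hh]
      simp only [eval_sub, eval_mul, eval_C, hv]
      field_simp
      simp
    have hder : (derivative h).eval x ≠ 0 := by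
      have : derivative h = C c * (derivative P - C v * derivative Q) := by
        rw [hh, hnum, hdenom]
        simp only [derivative_sub, derivative_mul, derivative_C, derivative_C_mul,
          zero_mul, mul_zero, zero_add]
        ring
      rw [this]
      simp only [eval_mul, eval_C, eval_sub]
      have hkx : (derivative P).eval x * Q.eval x - P.eval x * (derivative Q).eval x = -b := by
        have := congrArg (eval x) hkey
        simpa using this
      rw [hv']
      intro hcon
      rcases mul_eq_zero.mp hcon with h1 | h1
      · exact hc0 h1
      · apply hb
        have : (derivative P).eval x * Q.eval x - P.eval x * (derivative Q).eval x = 0 := by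
          field_simp at h1
          rw [sub_eq_zero]
          linear_combination h1
        rw [hkx] at this
        simpa using this.symm
    have hne : h ≠ 0 := by
      intro h0
      exact hder (by rw [h0]; simp)
    have hge : 1 ≤ h.rootMultiplicity x := (rootMultiplicity_pos hne).mpr hroot
    have hle : h.rootMultiplicity x ≤ 1 := by
      by_contra hlt
      push_neg at hlt
      have := isRoot_iterate_derivative_of_lt_rootMultiplicity (n := 1) hlt
      simp only [Function.iterate_one] at this
      exact hder this
    omega

end Helpers

/-- Let `K` be a perfect field of characteristic `p > 0`,
`T(x) = ∑_{i=0}^n a_i x^{p^i} ∈ K[x]` with `a₀ ≠ 0`, and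
`S(x) = T(x)^p / x^p = ∑ a_i^p x^{p (p^i - 1)}`.  Define `g(x) = x^p + 1/(T(x)+S(x))`.
Then `g'(x) = -a₀/(T(x)+S(x))²`, so `g` has no finite critical points other than poles,
and the branch locus of `g : ℙ¹ → ℙ¹` is contained in `{∞}`. -/
theorem stmt_13 (K : Type) [Field K] [PerfectField K] (p : ℕ) [Fact p.Prime] [CharP K p]
    (n : ℕ) (a : Fin (n + 1) → K) (ha : a 0 ≠ 0)
    (T S : K[X])
    (hT : T = ∑ i : Fin (n + 1), C (a i) * X ^ (p ^ (i : ℕ)))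
    (hS : S = ∑ i : Fin (n + 1), C ((a i) ^ p) * X ^ (p * (p ^ (i : ℕ) - 1)))
    (g : RatFunc K)
    (hg : g = algebraMap K[X] (RatFunc K) (X ^ p) +
      (algebraMap K[X] (RatFunc K) (T + S))⁻¹) :
    rDeriv g = - (algebraMap K[X] (RatFunc K) (C (a 0))) /
        (algebraMap K[X] (RatFunc K) (T + S)) ^ 2 ∧
    (∀ x : AlgebraicClosure K,
      2 ≤ ramIdx (ratFuncMap (algebraMap K (AlgebraicClosure K)) g) (OnePoint.some x) →
      rEval (ratFuncMap (algebraMap K (AlgebraicClosure K)) g) (OnePoint.some x)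
        = (∞ : OnePoint (AlgebraicClosure K))) ∧
    branchLocus (ratFuncMap (algebraMap K (AlgebraicClosure K)) g)
      ⊆ {(∞ : OnePoint (AlgebraicClosure K))} := by
  classical
  have hp : p.Prime := Fact.out
  have hp0 : (p : K) = 0 := CharP.cast_eq_zero K p
  -- derivative facts over K
  have hT' : derivative T = C (a 0) := by
    rw [hT, derivative_sum]
    rw [Finset.sum_eq_single (0 : Fin (n + 1))]
    · simp
    · intro i _ hi
      have hi' : (i : ℕ) ≠ 0 := Fin.val_ne_zero_iff.mpr hi
      rw [derivative_C_mul, derivative_X_pow]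
      have hz : ((p ^ (i : ℕ) : ℕ) : K) = 0 := by
        rw [CharP.cast_eq_zero_iff K p]
        exact dvd_pow_self p hi'
      simp [hz]
    · intro h
      exact absurd (Finset.mem_univ _) h
  have hS' : derivative S = 0 := by
    rw [hS, derivative_sum]
    apply Finset.sum_eq_zero
    intro i _
    rw [derivative_C_mul, derivative_X_pow]
    have hz : ((p * (p ^ (i : ℕ) - 1) : ℕ) : K) = 0 := by
      rw [CharP.cast_eq_zero_iff K p]
      exact dvd_mul_right _ _
    simp [hz]
  have hQ' : derivative (T + S) = C (a 0) := by
    rw [derivative_add, hT', hS', add_zero]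
  have hXp : derivative (X ^ p : K[X]) = 0 := by
    rw [derivative_X_pow]
    simp [hp0]
  -- T + S ≠ 0
  have hevT : T.eval 0 = 0 := by
    rw [hT, eval_finset_sum]
    apply Finset.sum_eq_zero
    intro i _
    have : (p ^ (i : ℕ)) ≠ 0 := pow_ne_zero _ hp.ne_zero
    simp [zero_pow this]
  have hevS : S.eval 0 = a 0 ^ p := by
    rw [hS, eval_finset_sum]
    rw [Finset.sum_eq_single (0 : Fin (n + 1))]
    · simp
    · intro i _ hi
      have hi' : (i : ℕ) ≠ 0 := Fin.val_ne_zero_iff.mpr hi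
      have h1 : 1 < p ^ (i : ℕ) := Nat.one_lt_pow hi' hp.one_lt
      have : p * (p ^ (i : ℕ) - 1) ≠ 0 :=
        Nat.mul_ne_zero hp.ne_zero (Nat.sub_ne_zero_of_lt h1)
      simp [zero_pow this]
    · intro h
      exact absurd (Finset.mem_univ _) h
  have hQ0 : T + S ≠ 0 := by
    intro h
    have := congrArg (eval 0) h
    rw [eval_add, hevT, hevS, zero_add, eval_zero] at this
    exact ha (pow_eq_zero_iff hp.ne_zero |>.mp this)
  -- Part 1
  obtain ⟨hd1, -, -⟩ := core_aux p hp.pos (a 0) ha (T + S) hQ0 hQ' hXp g hg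
  -- base change to the algebraic closure
  set L := AlgebraicClosure K
  set φ : K →+* L := algebraMap K L with hφdef
  have hφinj : Function.Injective φ := φ.injective
  have hmap : ∀ q : K[X], ratFuncMap φ (algebraMap K[X] (RatFunc K) q)
      = algebraMap L[X] (RatFunc L) (q.map φ) := by
    intro q
    rw [show algebraMap K[X] (RatFunc K) q
      = algebraMap K[X] (RatFunc K) q / algebraMap K[X] (RatFunc K) (1 : K[X]) by simp]
    rw [ratFuncMap, RatFunc.coe_mapRingHom_eq_coe_map, RatFunc.map_apply_div]
    simp
  set gL : RatFunc L := ratFuncMap φ g with hgLdef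
  set QL : L[X] := (T + S).map φ with hQLdef
  have hgL : gL = algebraMap L[X] (RatFunc L) (X ^ p) + (algebraMap L[X] (RatFunc L) QL)⁻¹ := by
    rw [hgLdef, hg, map_add, map_inv₀, hmap, hmap, Polynomial.map_pow, Polynomial.map_X]
  have hbL : φ (a 0) ≠ 0 := fun h => ha (hφinj (by simpa using h))
  have hQL0 : QL ≠ 0 := (Polynomial.map_ne_zero_iff hφinj).mpr hQ0
  have hQL' : derivative QL = C (φ (a 0)) := by
    rw [hQLdef, derivative_map, hQ', Polynomial.map_C]
  have hL : CharP L p := charP_of_injective_ringHom hφinj p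
  have hXpL : derivative (X ^ p : L[X]) = 0 := by
    rw [derivative_X_pow]
    simp [CharP.cast_eq_zero L p]
  obtain ⟨-, hdeg, hram⟩ := core_aux p hp.pos (φ (a 0)) hbL QL hQL0 hQL' hXpL gL hgL
  have key : ∀ x : L, 2 ≤ ramIdx gL (OnePoint.some x) → rEval gL (OnePoint.some x) = ∞ := by
    intro x hx
    have hri : ramIdx gL (OnePoint.some x) = ramIdxFin gL x := rfl
    have hre : rEval gL (OnePoint.some x)
        = if gL.denom.eval x = 0 then (∞ : OnePoint L)
          else OnePoint.some (gL.num.eval x / gL.denom.eval x) := rfl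
    by_cases h0 : gL.denom.eval x = 0
    · rw [hre, if_pos h0]
    · rw [hri, hram x h0] at hx
      omega
  refine ⟨hd1, key, ?_⟩
  intro w hw
  obtain ⟨pt, hwe, hwr⟩ := hw
  cases pt with
  | infty =>
      have hre : rEval gL (∞ : OnePoint L)
          = if gL.denom.degree < gL.num.degree then (∞ : OnePoint L)
            else OnePoint.some (gL.num.coeff gL.denom.natDegree / gL.denom.leadingCoeff) := rfl
      have : rEval gL (∞ : OnePoint L) = ∞ := by rw [hre, if_pos hdeg]
      have hw' : w = ∞ := by rw [← hwe]; exact this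
      simp [hw']
  | coe x =>
      have hw' : w = ∞ := by rw [← hwe]; exact key x hwr
      simp [hw']
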